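/- Reduction from asymmetric to symmetric transshipment (Corollary 1.1): let b ∈ ℝⁿ, b ≠ 0, and let α ≥ 1. Suppose π̄* minimizes ‖W₋⁻¹Aᵀπ‖_∞ over { π ∈ ℝⁿ : bᵀπ = 1 }, and π* minimizes q(R★Aᵀπ) over the same set. If π̄ ∈ ℝⁿ satisfies bᵀπ̄ = 1 and ‖W₋⁻¹Aᵀπ̄‖_∞ ≤ α·‖W₋⁻¹Aᵀπ̄*‖_∞, then π̄ is feasible for the normalized asymmetric problem and q(R★Aᵀπ̄) ≤ α·λ·q(R★Aᵀπ*). -/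

import Mathlib

open Matrix BigOperators

/-- Asymmetric "norm" `p(v) = Σᵢ max(0, vᵢ)`. -/
noncomputable def pnorm {d : Type*} [Fintype d] (v : d → ℝ) : ℝ := ∑ i, max (v i) 0

/-- Asymmetric "norm" `q(v) = max(0, maxᵢ vᵢ)`. -/
noncomputable def qnorm {d : Type*} [Fintype d] (v : d → ℝ) : ℝ :=
  Finset.univ.fold max 0 v

/-- ∞-norm `‖v‖_∞ = maxᵢ |vᵢ|` (as `max(0, maxᵢ |vᵢ|)`, which agrees with it). -/
noncomputable def infnorm {d : Type*} [Fintype d] (v : d → ℝ) : ℝ :=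
  Finset.univ.fold max 0 (fun i => |v i|)

/-- 1-norm `‖v‖₁ = Σᵢ |vᵢ|`. -/
noncomputable def onenorm {d : Type*} [Fintype d] (v : d → ℝ) : ℝ := ∑ i, |v i|

/-- `W★ : ℝᵐ → ℝ²ᵐ`, sending `x` to `(W₊x, −W₋x)`. -/
noncomputable def Wstar {m : ℕ} (wp wm : Fin m → ℝ) (x : Fin m → ℝ) : Fin m ⊕ Fin m → ℝ :=
  Sum.elim (fun e => wp e * x e) (fun e => -(wm e * x e))

/-- `R★ : ℝᵐ → ℝ²ᵐ`, sending `x` to `(W₊⁻¹x, −W₋⁻¹x)`. -/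
noncomputable def Rstar {m : ℕ} (wp wm : Fin m → ℝ) (x : Fin m → ℝ) : Fin m ⊕ Fin m → ℝ :=
  Sum.elim (fun e => x e / wp e) (fun e => -(x e / wm e))

/-- The transpose `R★ᵀ : ℝ²ᵐ → ℝᵐ`. -/
noncomputable def RstarT {m : ℕ} (wp wm : Fin m → ℝ) (g : Fin m ⊕ Fin m → ℝ) : Fin m → ℝ :=
  fun e => g (Sum.inl e) / wp e - g (Sum.inr e) / wm e

/-- Soft-max `lse_β(v) = (1/β)·ln(Σᵢ e^{β·vᵢ})`. -/
noncomputable def lse {d : Type*} [Fintype d] (β : ℝ) (v : d → ℝ) : ℝ :=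
  (1 / β) * Real.log (∑ i, Real.exp (β * v i))

/-- Gradient of the soft-max: `∇lse_β(v)ᵢ = e^{β·vᵢ}/Σⱼ e^{β·vⱼ}`. -/
noncomputable def gradLse {d : Type*} [Fintype d] (β : ℝ) (v : d → ℝ) : d → ℝ :=
  fun i => Real.exp (β * v i) / ∑ j, Real.exp (β * v j)

/-- Potential `φ_β(π) = lse_β(R★Aᵀπ)`. -/
noncomputable def pot {n m : ℕ} (A : Matrix (Fin n) (Fin m) ℝ) (wp wm : Fin m → ℝ)
    (β : ℝ) (π : Fin n → ℝ) : ℝ :=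
  lse β (Rstar wp wm (Aᵀ *ᵥ π))

/-- Gradient of the potential: `∇φ_β(π) = A·R★ᵀ·∇lse_β(R★Aᵀπ)`. -/
noncomputable def gradPot {n m : ℕ} (A : Matrix (Fin n) (Fin m) ℝ) (wp wm : Fin m → ℝ)
    (β : ℝ) (π : Fin n → ℝ) : Fin n → ℝ :=
  A *ᵥ RstarT wp wm (gradLse β (Rstar wp wm (Aᵀ *ᵥ π)))

lemma qnorm_nonneg {d : Type*} [Fintype d] (v : d → ℝ) : 0 ≤ qnorm v := by
  unfold qnorm
  rw [Finset.le_fold_max]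
  exact Or.inl le_rfl

lemma infnorm_nonneg {d : Type*} [Fintype d] (v : d → ℝ) : 0 ≤ infnorm v := by
  unfold infnorm
  rw [Finset.le_fold_max]
  exact Or.inl le_rfl

lemma le_infnorm {d : Type*} [Fintype d] (v : d → ℝ) (i : d) : |v i| ≤ infnorm v := by
  unfold infnorm
  rw [Finset.le_fold_max]
  exact Or.inr ⟨i, Finset.mem_univ i, le_rfl⟩

lemma le_qnorm {d : Type*} [Fintype d] (v : d → ℝ) (i : d) : v i ≤ qnorm v := by
  unfold qnorm
  rw [Finset.le_fold_max]
  exact Or.inr ⟨i, Finset.mem_univ i, le_rfl⟩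

lemma q_le_inf {m : ℕ} (wp wm : Fin m → ℝ) (hw : ∀ e, 0 < wm e ∧ wm e ≤ wp e)
    (x : Fin m → ℝ) :
    qnorm (Rstar wp wm x) ≤ infnorm (fun e => x e / wm e) := by
  unfold qnorm
  rw [Finset.fold_max_le]
  refine ⟨infnorm_nonneg _, fun i _ => ?_⟩
  cases i with
  | inl e =>
      have h1 := (hw e).1
      have h2 := (hw e).2
      show x e / wp e ≤ _
      calc x e / wp e ≤ |x e| / wm e :=
            div_le_div₀ (abs_nonneg _) (le_abs_self _) h1 h2
        _ = |x e / wm e| := by rw [abs_div, abs_of_pos h1]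
        _ ≤ _ := le_infnorm (fun e => x e / wm e) e
  | inr e =>
      have h1 := (hw e).1
      show -(x e / wm e) ≤ _
      calc -(x e / wm e) ≤ |x e / wm e| := neg_le_abs _
        _ ≤ _ := le_infnorm (fun e => x e / wm e) e

lemma inf_le_lam_q {m : ℕ} (hm : 1 ≤ m) (wp wm : Fin m → ℝ)
    (hw : ∀ e, 0 < wm e ∧ wm e ≤ wp e) (x : Fin m → ℝ) :
    infnorm (fun e => x e / wm e) ≤
      (⨆ e : Fin m, wp e / wm e) * qnorm (Rstar wp wm x) := by
  have hbdd : BddAbove (Set.range fun e => wp e / wm e) :=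
    (Set.finite_range _).bddAbove
  have hlam_le : ∀ e, wp e / wm e ≤ ⨆ e : Fin m, wp e / wm e :=
    fun e => le_ciSup hbdd e
  set lam := ⨆ e : Fin m, wp e / wm e with hlam
  have hlam1 : (1 : ℝ) ≤ lam := by
    refine le_trans ?_ (hlam_le ⟨0, by omega⟩)
    rw [le_div_iff₀ (hw _).1]
    simpa using (hw ⟨0, by omega⟩).2
  set q := qnorm (Rstar wp wm x) with hqdef
  have hq : 0 ≤ q := qnorm_nonneg _
  unfold infnorm
  rw [Finset.fold_max_le]
  refine ⟨by positivity, fun e _ => ?_⟩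
  have h1 := (hw e).1
  have h2 := (hw e).2
  have hp : 0 < wp e := lt_of_lt_of_le h1 h2
  have hxq : x e / wp e ≤ q := by
    have := le_qnorm (Rstar wp wm x) (Sum.inl e)
    exact this
  have hxq' : -(x e / wm e) ≤ q := by
    have := le_qnorm (Rstar wp wm x) (Sum.inr e)
    exact this
  have hup : x e ≤ q * wp e := (div_le_iff₀ hp).mp hxq
  have hlow : -x e ≤ q * wm e := by
    rw [← neg_div] at hxq'
    exact (div_le_iff₀ h1).mp hxq'
  have hwl : wp e ≤ lam * wm e := (div_le_iff₀ h1).mp (hlam_le e)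
  rw [abs_div, abs_of_pos h1, div_le_iff₀ h1]
  rw [abs_le]
  constructor
  · have h3 : q * wm e ≤ lam * (q * wm e) :=
      le_mul_of_one_le_left (by positivity) hlam1
    nlinarith
  · have h4 : q * wp e ≤ q * (lam * wm e) := mul_le_mul_of_nonneg_left hwl hq
    nlinarith

/-- Reduction from asymmetric to symmetric transshipment (Corollary 1.1):
an `α`-approximate solution of the symmetrized problem
`min{ ‖W₋⁻¹Aᵀπ‖_∞ : bᵀπ = 1 }` is an `α·λ`-approximate solution of the
normalized asymmetric problem `min{ q(R★Aᵀπ) : bᵀπ = 1 }`. -/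
theorem symmetric_to_asymmetric_reduction {n m : ℕ} (hn : 1 ≤ n) (hm : 1 ≤ m)
    (A : Matrix (Fin n) (Fin m) ℝ) (wp wm : Fin m → ℝ)
    (hw : ∀ e, 0 < wm e ∧ wm e ≤ wp e)
    (b : Fin n → ℝ) (hb : b ≠ 0) (α : ℝ) (hα : 1 ≤ α)
    (πbarstar πstar πbar : Fin n → ℝ)
    (hbarstar_feas : b ⬝ᵥ πbarstar = 1)
    (hbarstar_opt : ∀ π : Fin n → ℝ, b ⬝ᵥ π = 1 →
      infnorm (fun e => (Aᵀ *ᵥ πbarstar) e / wm e) ≤ infnorm (fun e => (Aᵀ *ᵥ π) e / wm e))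
    (hstar_feas : b ⬝ᵥ πstar = 1)
    (hstar_opt : ∀ π : Fin n → ℝ, b ⬝ᵥ π = 1 →
      qnorm (Rstar wp wm (Aᵀ *ᵥ πstar)) ≤ qnorm (Rstar wp wm (Aᵀ *ᵥ π)))
    (hbar_feas : b ⬝ᵥ πbar = 1)
    (hbar_apx : infnorm (fun e => (Aᵀ *ᵥ πbar) e / wm e) ≤
      α * infnorm (fun e => (Aᵀ *ᵥ πbarstar) e / wm e)) :
    b ⬝ᵥ πbar = 1 ∧
    qnorm (Rstar wp wm (Aᵀ *ᵥ πbar)) ≤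
      α * (⨆ e : Fin m, wp e / wm e) * qnorm (Rstar wp wm (Aᵀ *ᵥ πstar)) := by
  refine ⟨hbar_feas, ?_⟩
  calc qnorm (Rstar wp wm (Aᵀ *ᵥ πbar))
      ≤ infnorm (fun e => (Aᵀ *ᵥ πbar) e / wm e) := q_le_inf wp wm hw _
    _ ≤ α * infnorm (fun e => (Aᵀ *ᵥ πbarstar) e / wm e) := hbar_apx
    _ ≤ α * infnorm (fun e => (Aᵀ *ᵥ πstar) e / wm e) := by
        have := hbarstar_opt πstar hstar_feas
        nlinarith [infnorm_nonneg (fun e => (Aᵀ *ᵥ πstar) e / wm e)]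
    _ ≤ α * ((⨆ e : Fin m, wp e / wm e) * qnorm (Rstar wp wm (Aᵀ *ᵥ πstar))) := by
        have := inf_le_lam_q hm wp wm hw (Aᵀ *ᵥ πstar)
        nlinarith [infnorm_nonneg (fun e => (Aᵀ *ᵥ πstar) e / wm e)]
    _ = _ := by ring
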